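/- For every natural number k and every index i ∈ Fin n, the i-th component of ((R·O)^k)·ψ equals √(π(i))/√Q · sin((2k+1)θ) if i ∈ W, and √(π(i))/√(1−Q) · cos((2k+1)θ) if i ∉ W. -/

import Mathlib

open Real Matrix Finset

/-- Componentwise description of the state after `k` Grover iterations:
rewarded components share the factor `sin ((2k+1)θ)/√Q` and unrewarded
components the factor `cos ((2k+1)θ)/√(1-Q)`. -/
theorem grover_pow_mulVec_apply (n : ℕ) (pr : Fin n → ℝ)
    (hpr : ∀ i, 0 ≤ pr i) (hsum : ∑ i, pr i = 1)
    (W : Finset (Fin n)) (Q : ℝ) (hQ : Q = ∑ i ∈ W, pr i)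
    (hQpos : 0 < Q) (hQlt : Q < 1)
    (θ : ℝ) (hθ : θ = Real.arcsin (Real.sqrt Q))
    (ψ : Fin n → ℝ) (hψ : ∀ i, ψ i = Real.sqrt (pr i))
    (O : Matrix (Fin n) (Fin n) ℝ)
    (hO : O = Matrix.diagonal (fun i => if i ∈ W then (-1 : ℝ) else 1))
    (R : Matrix (Fin n) (Fin n) ℝ) (hR : R = 2 • Matrix.vecMulVec ψ ψ - 1) :
    ∀ (k : ℕ) (i : Fin n),
      ((R * O) ^ k).mulVec ψ i =
        if i ∈ W then
          Real.sqrt (pr i) / Real.sqrt Q * Real.sin ((2 * k + 1) * θ)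
        else
          Real.sqrt (pr i) / Real.sqrt (1 - Q) * Real.cos ((2 * k + 1) * θ) := by
  have hQ1' : (0:ℝ) < 1 - Q := by linarith
  have hsq1 : Real.sqrt Q ≤ 1 := by
    rw [show (1:ℝ) = Real.sqrt 1 by simp]
    exact Real.sqrt_le_sqrt hQlt.le
  have hsin : Real.sin θ = Real.sqrt Q := by
    rw [hθ, Real.sin_arcsin (by linarith [Real.sqrt_nonneg Q]) hsq1]
  have hcos : Real.cos θ = Real.sqrt (1 - Q) := by
    rw [hθ, Real.cos_arcsin, Real.sq_sqrt hQpos.le]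
  have ha : Real.sqrt Q ≠ 0 := by positivity
  have hb : Real.sqrt (1 - Q) ≠ 0 := by positivity
  have haa : Real.sqrt Q * Real.sqrt Q = Q := Real.mul_self_sqrt hQpos.le
  have hbb : Real.sqrt (1 - Q) * Real.sqrt (1 - Q) = 1 - Q :=
    Real.mul_self_sqrt hQ1'.le
  have hWsum : ∑ i ∈ W, pr i = Q := hQ.symm
  have hWc : ∑ i ∈ Wᶜ, pr i = 1 - Q := by
    have h := Finset.sum_add_sum_compl W pr
    rw [hsum, hWsum] at h
    linarith
  intro k
  induction k with
  | zero =>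
    intro i
    simp only [pow_zero, Matrix.one_mulVec, Nat.cast_zero]
    rw [hψ i]
    by_cases hi : i ∈ W
    · simp only [hi, if_true]
      rw [show (2 * (0:ℝ) + 1) * θ = θ by ring, hsin]
      field_simp
    · simp only [hi, if_false]
      rw [show (2 * (0:ℝ) + 1) * θ = θ by ring, hcos]
      field_simp
  | succ k IH =>
    intro i
    set s := Real.sin ((2 * (k:ℝ) + 1) * θ) with hs
    set c := Real.cos ((2 * (k:ℝ) + 1) * θ) with hc
    set v : Fin n → ℝ := ((R * O) ^ k).mulVec ψ with hv
    have hstep : ((R * O) ^ (k + 1)).mulVec ψ = R.mulVec (O.mulVec v) := by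
      rw [hv, Matrix.mulVec_mulVec, Matrix.mulVec_mulVec, ← pow_succ']
    rw [hstep]
    have hOv : ∀ j, (O.mulVec v) j =
        if j ∈ W then -(Real.sqrt (pr j) / Real.sqrt Q * s)
        else Real.sqrt (pr j) / Real.sqrt (1 - Q) * c := by
      intro j
      rw [hO, Matrix.mulVec_diagonal, IH j]
      by_cases hj : j ∈ W <;> simp [hj]
    have hdot : ∑ j, ψ j * (O.mulVec v) j
        = -(Real.sqrt Q * s) + Real.sqrt (1 - Q) * c := by
      rw [← Finset.sum_add_sum_compl W]
      have h1 : ∑ j ∈ W, ψ j * (O.mulVec v) j = -(Real.sqrt Q * s) := by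
        have e : ∀ j ∈ W, ψ j * (O.mulVec v) j = pr j * (-(s / Real.sqrt Q)) := by
          intro j hj
          rw [hOv j, hψ j, if_pos hj]
          have hp := Real.mul_self_sqrt (hpr j)
          field_simp [ha]
          linear_combination (-s) * hp
        rw [Finset.sum_congr rfl e, ← Finset.sum_mul, hWsum]
        field_simp
        linear_combination s * haa
      have h2 : ∑ j ∈ Wᶜ, ψ j * (O.mulVec v) j = Real.sqrt (1 - Q) * c := by
        have e : ∀ j ∈ Wᶜ, ψ j * (O.mulVec v) j = pr j * (c / Real.sqrt (1 - Q)) := by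
          intro j hj
          rw [hOv j, hψ j, if_neg (Finset.mem_compl.mp hj)]
          have hp := Real.mul_self_sqrt (hpr j)
          field_simp [hb]
          linear_combination c * hp
        rw [Finset.sum_congr rfl e, ← Finset.sum_mul, hWc]
        field_simp
        linear_combination (-c) * hbb
      rw [h1, h2]
    have hRw : (R.mulVec (O.mulVec v)) i
        = 2 * (ψ i * ∑ j, ψ j * (O.mulVec v) j) - (O.mulVec v) i := by
      rw [hR, Matrix.sub_mulVec, Matrix.smul_mulVec, Matrix.one_mulVec]
      simp only [Pi.sub_apply, Pi.smul_apply, smul_eq_mul]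
      congr 1
      simp [Matrix.mulVec, Matrix.vecMulVec_apply, dotProduct, Finset.mul_sum, mul_assoc]
    rw [hRw, hdot, hOv i, hψ i]
    have hang : (2 * ((k:ℝ) + 1) + 1) * θ = (2 * (k:ℝ) + 1) * θ + 2 * θ := by ring
    push_cast
    rw [hang, Real.sin_add, Real.cos_add, Real.sin_two_mul, Real.cos_two_mul, hsin, hcos,
      ← hs, ← hc]
    by_cases hi : i ∈ W
    · simp only [hi, if_true]
      field_simp
      linear_combination (-2 * Real.sqrt (pr i) * s) * haa + (-2 * Real.sqrt (pr i) * s) * hbb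
    · simp only [hi, if_false]
      field_simp
      linear_combination
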